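/- Variational free energy bounds surprise via Jeffrey's posterior: with M a full-support joint distribution on S × O, ξ a distribution on O, and q a full-support distribution on S, the variational free energy F(q) = ∑_{s,o} q(s)ξ(o)(log q(s) − log M(s,o)) satisfies F(q) ≥ D_KL(q ‖ J) + S(ξ, M_O), where J(s) = ∑_o ξ(o) M(s,o)/M_O(o) is the Jeffrey update and S(ξ, M_O) = −∑_o ξ(o) log M_O(o). -/

import Mathlib

/-- VFE bounds the KL divergence to the Jeffrey update plus the surprise. -/
theorem vfe_ge_kl_jeffrey_plus_surprise {S O : Type*} [Fintype S] [Fintype O]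
    (M : S → O → ℝ) (hM : ∀ s o, 0 < M s o) (hM1 : ∑ s, ∑ o, M s o = 1)
    (ξ : O → ℝ) (hξ0 : ∀ o, 0 ≤ ξ o) (hξ1 : ∑ o, ξ o = 1)
    (q : S → ℝ) (hq : ∀ s, 0 < q s) (hq1 : ∑ s, q s = 1) :
    ∑ s, ∑ o, q s * ξ o * (Real.log (q s) - Real.log (M s o)) ≥
      (∑ s, q s * Real.log (q s / ∑ o, ξ o * (M s o / ∑ s', M s' o)))
        + (-∑ o, ξ o * Real.log (∑ s, M s o)) := by
  have hSne : Nonempty S := by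
    rcases isEmpty_or_nonempty S with h | h
    · rw [Finset.univ_eq_empty, Finset.sum_empty] at hq1; norm_num at hq1
    · exact h
  set MO : O → ℝ := fun o => ∑ s', M s' o with hMO
  have hMOpos : ∀ o, 0 < MO o := fun o =>
    Finset.sum_pos (fun s _ => hM s o) Finset.univ_nonempty
  set J : S → ℝ := fun s => ∑ o, ξ o * (M s o / MO o) with hJ
  have hJpos : ∀ s, 0 < J s := by
    intro s
    have hex : ∃ o, 0 < ξ o := by
      by_contra h
      push_neg at h
      have : ∀ o, ξ o = 0 := fun o => le_antisymm (h o) (hξ0 o)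
      simp [this] at hξ1
    obtain ⟨o, ho⟩ := hex
    refine Finset.sum_pos'
      (fun o _ => mul_nonneg (hξ0 o) (div_nonneg (hM s o).le (hMOpos o).le))
      ⟨o, Finset.mem_univ o, mul_pos ho (div_pos (hM s o) (hMOpos o))⟩
  -- key Jensen step per s
  have key : ∀ s, ∑ o, ξ o * (Real.log (M s o) - Real.log (MO o)) ≤ Real.log (J s) := by
    intro s
    have hgm := Real.geom_mean_le_arith_mean_weighted Finset.univ ξ (fun o => M s o / MO o)
      (fun o _ => hξ0 o) hξ1 (fun o _ => div_nonneg (hM s o).le (hMOpos o).le)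
    have hprodpos : 0 < ∏ o, (M s o / MO o) ^ ξ o :=
      Finset.prod_pos fun o _ => Real.rpow_pos_of_pos (div_pos (hM s o) (hMOpos o)) _
    have hlog := Real.log_le_log hprodpos hgm
    have hlogprod : Real.log (∏ o, (M s o / MO o) ^ ξ o)
        = ∑ o, ξ o * (Real.log (M s o) - Real.log (MO o)) := by
      rw [Real.log_prod
        (fun o _ => (Real.rpow_pos_of_pos (div_pos (hM s o) (hMOpos o)) _).ne')]
      refine Finset.sum_congr rfl fun o _ => ?_
      rw [Real.log_rpow (div_pos (hM s o) (hMOpos o)),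
        Real.log_div (hM s o).ne' (hMOpos o).ne']
    rw [hlogprod] at hlog
    exact hlog
  have per : ∀ s, ∑ o, q s * ξ o * (Real.log (q s) - Real.log (M s o))
      ≥ q s * Real.log (q s / J s) - q s * ∑ o, ξ o * Real.log (MO o) := by
    intro s
    have e1 : ∑ o, q s * ξ o * (Real.log (q s) - Real.log (M s o))
        = q s * (Real.log (q s)
            - ∑ o, ξ o * (Real.log (M s o) - Real.log (MO o))
            - ∑ o, ξ o * Real.log (MO o)) := by
      have h2 : ∑ o, q s * ξ o * (Real.log (q s) - Real.log (M s o))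
          = q s * ∑ o, (ξ o * Real.log (q s) - ξ o * Real.log (M s o)) := by
        rw [Finset.mul_sum]; exact Finset.sum_congr rfl fun o _ => by ring
      have h3 : ∑ o, ξ o * (Real.log (M s o) - Real.log (MO o))
          = (∑ o, ξ o * Real.log (M s o)) - ∑ o, ξ o * Real.log (MO o) := by
        rw [← Finset.sum_sub_distrib]; exact Finset.sum_congr rfl fun o _ => by ring
      rw [h2, Finset.sum_sub_distrib, ← Finset.sum_mul, hξ1, h3]
      ring
    have e2 : q s * Real.log (q s / J s)
        = q s * Real.log (q s) - q s * Real.log (J s) := by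
      rw [Real.log_div (hq s).ne' (hJpos s).ne']; ring
    have h4 := mul_le_mul_of_nonneg_left (key s) (hq s).le
    rw [e1, e2]
    nlinarith [h4]
  have hsum := Finset.sum_le_sum (fun s (_ : s ∈ Finset.univ) => per s)
  have hconst : ∑ s, (q s * Real.log (q s / J s) - q s * ∑ o, ξ o * Real.log (MO o))
      = (∑ s, q s * Real.log (q s / J s)) - ∑ o, ξ o * Real.log (MO o) := by
    rw [Finset.sum_sub_distrib, ← Finset.sum_mul, hq1, one_mul]
  rw [hconst] at hsum
  linarith [hsum]
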